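/- For positive integers T, w, m with w ≤ T, every (⌊T/(m+1)⌋, ⌈w/m⌉)-SEC binary sequence is a ((m+1)⌊T/(m+1)⌋, m⌈w/m⌉)-SWC sequence: any window of (m+1)⌊T/(m+1)⌋ consecutive bits completely contains at least m full blocks of length ⌊T/(m+1)⌋, hence contains at least m⌈w/m⌉ ones. -/

import Mathlib

/-- Every (⌊T/(m+1)⌋, ⌈w/m⌉)-SEC binary sequence is a
((m+1)⌊T/(m+1)⌋, m⌈w/m⌉)-SWC sequence
(`(w + m - 1) / m` is the natural-number expression for `⌈w/m⌉`). -/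
theorem stmt_13 (k T w m : ℕ) (hm : 1 ≤ m) (hw : 1 ≤ w) (hwT : w ≤ T)
    (hL : 1 ≤ T / (m + 1))
    (b : ℕ → ℕ) (hbin : ∀ i, b i ≤ 1)
    (hSEC : ∀ j < k,
      (w + m - 1) / m ≤ ∑ t ∈ Finset.Icc 1 (T / (m + 1)), b (j * (T / (m + 1)) + t)) :
    ∀ j, j + (m + 1) * (T / (m + 1)) ≤ k * (T / (m + 1)) →
      m * ((w + m - 1) / m) ≤ ∑ t ∈ Finset.Icc 1 ((m + 1) * (T / (m + 1))), b (j + t) := by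
  intro j hj
  set L := T / (m + 1) with hLdef
  set c := (w + m - 1) / m with hcdef
  -- reindexing lemma
  have shift : ∀ (a N : ℕ), (∑ t ∈ Finset.Icc 1 N, b (a + t)) = ∑ i ∈ Finset.Ioc a (a + N), b i := by
    intro a N
    have h1 : Finset.Icc 1 N = Finset.Ioc 0 N := by
      rw [← Finset.Icc_add_one_left_eq_Ioc, zero_add]
    have h2 : Finset.Ioc a (a + N) = Finset.map (addLeftEmbedding a) (Finset.Ioc 0 N) := by
      rw [Finset.map_add_left_Ioc]
      simp
    rw [h1, h2, Finset.sum_map]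
    rfl
  -- ceiling of j / L
  set q0 := (j + L - 1) / L with hq0
  clear_value L c q0
  have hdm := Nat.div_add_mod (j + L - 1) L
  rw [← hq0] at hdm
  have hmod : (j + L - 1) % L < L := Nat.mod_lt _ (by omega)
  have hcomm : q0 * L = L * q0 := Nat.mul_comm _ _
  have h1 : j ≤ q0 * L := by omega
  have h2 : q0 * L ≤ j + L := by omega
  have hq0k : q0 + m ≤ k := by
    have : (q0 + m) * L ≤ k * L := by
      calc (q0 + m) * L = q0 * L + m * L := by ring
        _ ≤ j + L + m * L := by omega
        _ = j + (m + 1) * L := by ring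
        _ ≤ k * L := hj
    exact Nat.le_of_mul_le_mul_right this (by omega)
  have blocks : ∀ n, q0 + n ≤ k →
      n * c ≤ ∑ i ∈ Finset.Ioc (q0 * L) ((q0 + n) * L), b i := by
    intro n
    induction n with
    | zero => simp
    | succ p ih =>
      intro hk
      have hsplit : (∑ i ∈ Finset.Ioc (q0 * L) ((q0 + p) * L), b i)
          + ∑ i ∈ Finset.Ioc ((q0 + p) * L) ((q0 + p + 1) * L), b i
          = ∑ i ∈ Finset.Ioc (q0 * L) ((q0 + p + 1) * L), b i :=
        Finset.sum_Ioc_consecutive _ (Nat.mul_le_mul_right _ (by omega))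
          (Nat.mul_le_mul_right _ (by omega))
      have hb : c ≤ ∑ i ∈ Finset.Ioc ((q0 + p) * L) ((q0 + p) * L + L), b i := by
        rw [← shift]
        exact hSEC (q0 + p) (by omega)
      have heq : (q0 + p + 1) * L = (q0 + p) * L + L := by ring
      have := ih (by omega)
      show (p + 1) * c ≤ ∑ i ∈ Finset.Ioc (q0 * L) ((q0 + p + 1) * L), b i
      rw [← hsplit, heq]
      calc (p + 1) * c = p * c + c := by ring
        _ ≤ _ := Nat.add_le_add this hb
  have hsubset : Finset.Ioc (q0 * L) ((q0 + m) * L) ⊆ Finset.Ioc j (j + (m + 1) * L) :=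
    Finset.Ioc_subset_Ioc h1 (by calc (q0 + m) * L = q0 * L + m * L := by ring
      _ ≤ j + L + m * L := by omega
      _ = j + (m + 1) * L := by ring)
  calc m * c ≤ ∑ i ∈ Finset.Ioc (q0 * L) ((q0 + m) * L), b i := blocks m hq0k
    _ ≤ ∑ i ∈ Finset.Ioc j (j + (m + 1) * L), b i :=
        Finset.sum_le_sum_of_subset hsubset
    _ = ∑ t ∈ Finset.Icc 1 ((m + 1) * L), b (j + t) := (shift _ _).symm
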